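/- The newborn submatrices have the same spectral radii as the full matrices: ρ(N̄) = ρ(N) = R₀ and ρ(W̄) = ρ(W). -/

import Mathlib

open Matrix BigOperators

/-- Spectral radius of a real square matrix: the maximum modulus of its complex
eigenvalues (elements of the spectrum of the matrix viewed over `ℂ`). -/
noncomputable def specRad {ι : Type*} [Fintype ι] [DecidableEq ι]
    (M : Matrix ι ι ℝ) : ℝ :=
  sSup {r : ℝ | ∃ μ : ℂ, μ ∈ spectrum ℂ (M.map Complex.ofReal) ∧ r = ‖μ‖}

/-- The induced `L¹` operator norm of a real matrix: the maximum absolute column sum. -/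
noncomputable def colNorm {ι : Type*} [Fintype ι] (M : Matrix ι ι ℝ) : ℝ :=
  ⨆ q, ∑ p, |M p q|

/-- Local fecundity matrix: first row `(f 0, …, f (m-1))`, other rows zero. -/
def localF (m : ℕ) (f : Fin m → ℝ) : Matrix (Fin m) (Fin m) ℝ :=
  Matrix.of fun k' k => if (k' : ℕ) = 0 then f k else 0

/-- Local survival matrix: diagonal entries `sd k`, subdiagonal entries `ss k`,
all other entries zero. -/
def localS (m : ℕ) (sd ss : Fin m → ℝ) : Matrix (Fin m) (Fin m) ℝ :=
  Matrix.of fun k' k =>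
    if k' = k then sd k else if (k' : ℕ) = (k : ℕ) + 1 then ss k else 0

/-- Global (block-diagonal) fecundity matrix `F = ⊕ᵢ Fⁱ`, indexed by
(stage, patch) pairs. -/
def fecMat (m n : ℕ) (f : Fin m → Fin n → ℝ) :
    Matrix (Fin m × Fin n) (Fin m × Fin n) ℝ :=
  Matrix.of fun p q =>
    if p.2 = q.2 then localF m (fun k => f k q.2) p.1 q.1 else 0

/-- Global (block-diagonal) survival matrix `S = ⊕ᵢ Sⁱ`. -/
def survMat (m n : ℕ) (sd ss : Fin m → Fin n → ℝ) :
    Matrix (Fin m × Fin n) (Fin m × Fin n) ℝ :=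
  Matrix.of fun p q =>
    if p.2 = q.2 then localS m (fun k => sd k q.2) (fun k => ss k q.2) p.1 q.1 else 0

/-- Global dispersion matrix: the `(i,j)` patch block is `diag (d 0 i j, …, d (m-1) i j)`. -/
def dispMat (m n : ℕ) (d : Fin m → Fin n → Fin n → ℝ) :
    Matrix (Fin m × Fin n) (Fin m × Fin n) ℝ :=
  Matrix.of fun p q => if p.1 = q.1 then d q.1 p.2 q.2 else 0

/-- Next-generation matrix `N = D F (I - D S)⁻¹`. -/
noncomputable def nextGen (m n : ℕ) (f : Fin m → Fin n → ℝ)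
    (sd ss : Fin m → Fin n → ℝ) (d : Fin m → Fin n → Fin n → ℝ) :
    Matrix (Fin m × Fin n) (Fin m × Fin n) ℝ :=
  dispMat m n d * fecMat m n f * (1 - dispMat m n d * survMat m n sd ss)⁻¹

/-- Partial next-generation matrix `W = F (I - D S)⁻¹`. -/
noncomputable def partGen (m n : ℕ) (f : Fin m → Fin n → ℝ)
    (sd ss : Fin m → Fin n → ℝ) (d : Fin m → Fin n → Fin n → ℝ) :
    Matrix (Fin m × Fin n) (Fin m × Fin n) ℝ :=
  fecMat m n f * (1 - dispMat m n d * survMat m n sd ss)⁻¹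

/-- Newborn submatrix: keep only the rows and columns with stage index `0`
(the newborn indices). -/
def newbornSub {m n : ℕ} (hm : 0 < m)
    (B : Matrix (Fin m × Fin n) (Fin m × Fin n) ℝ) : Matrix (Fin n) (Fin n) ℝ :=
  Matrix.of fun i j => B (⟨0, hm⟩, i) (⟨0, hm⟩, j)

/-- The alternative net reproductive number `R̂₀ = max_{x ∈ 𝒳} ‖N x‖`, where `𝒳`
is the set of nonnegative `L¹`-unit vectors supported on the newborn indices. -/
noncomputable def altR0 (m n : ℕ)
    (N : Matrix (Fin m × Fin n) (Fin m × Fin n) ℝ) : ℝ :=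
  sSup {r : ℝ | ∃ x : Fin m × Fin n → ℝ, (∀ p, 0 ≤ x p) ∧ (∑ p, |x p|) = 1 ∧
    (∀ p : Fin m × Fin n, (p.1 : ℕ) ≠ 0 → x p = 0) ∧ r = ∑ p, |N.mulVec x p|}


lemma matrix_mem_spectrum_iff {ι : Type*} [Fintype ι] [DecidableEq ι]
    (M : Matrix ι ι ℂ) (μ : ℂ) :
    μ ∈ spectrum ℂ M ↔ ∃ v : ι → ℂ, v ≠ 0 ∧ M.mulVec v = μ • v := by
  rw [spectrum.mem_iff, Algebra.algebraMap_eq_smul_one,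
    Matrix.isUnit_iff_isUnit_det, isUnit_iff_ne_zero, not_not,
    ← Matrix.exists_mulVec_eq_zero_iff]
  refine exists_congr fun v => and_congr_right fun hv => ?_
  rw [Matrix.sub_mulVec, Matrix.smul_mulVec, Matrix.one_mulVec, sub_eq_zero, eq_comm]

lemma spec_mul_comm {ι κ : Type*} [Fintype ι] [Fintype κ] [DecidableEq ι] [DecidableEq κ]
    (U : Matrix ι κ ℂ) (V : Matrix κ ι ℂ) {μ : ℂ} (hμ : μ ≠ 0)
    (h : μ ∈ spectrum ℂ (U * V)) : μ ∈ spectrum ℂ (V * U) := by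
  rw [matrix_mem_spectrum_iff] at h ⊢
  obtain ⟨v, hv, hMv⟩ := h
  refine ⟨V.mulVec v, fun h0 => ?_, ?_⟩
  · have h1 : (U * V).mulVec v = 0 := by
      rw [← Matrix.mulVec_mulVec, h0, Matrix.mulVec_zero]
    rw [hMv, smul_eq_zero] at h1
    rcases h1 with h1 | h1
    · exact hμ h1
    · exact hv h1
  · have h2 : U *ᵥ (V *ᵥ v) = μ • v := by rw [Matrix.mulVec_mulVec, hMv]
    rw [← Matrix.mulVec_mulVec, h2, Matrix.mulVec_smul]

lemma spec_newborn {m n : ℕ} (hm : 0 < m)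
    (B : Matrix (Fin m × Fin n) (Fin m × Fin n) ℝ)
    (hB : ∀ p q, (p.1 : ℕ) ≠ 0 → B p q = 0) {μ : ℂ} (hμ : μ ≠ 0) :
    μ ∈ spectrum ℂ (B.map Complex.ofReal) ↔
      μ ∈ spectrum ℂ ((newbornSub hm B).map Complex.ofReal) := by
  set U : Matrix (Fin m × Fin n) (Fin n) ℂ :=
    Matrix.of fun p j => if p = (⟨0, hm⟩, j) then 1 else 0 with hU
  set V : Matrix (Fin n) (Fin m × Fin n) ℂ :=
    Matrix.of fun j q => (B (⟨0, hm⟩, j) q : ℂ) with hV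
  have hUV : B.map Complex.ofReal = U * V := by
    ext p q
    simp only [Matrix.map_apply, Matrix.mul_apply, hU, hV, Matrix.of_apply]
    by_cases hp : p.1 = ⟨0, hm⟩
    · have hpp : p = (⟨0, hm⟩, p.2) := Prod.ext hp rfl
      rw [Finset.sum_eq_single p.2]
      · rw [if_pos hpp, one_mul, ← hpp]
      · intro j _ hj
        rw [if_neg, zero_mul]
        intro hcon
        exact hj (by rw [hpp] at hcon; exact (Prod.ext_iff.mp hcon).2.symm)
      · intro hmem; exact absurd (Finset.mem_univ p.2) hmem
    · have h0 : B p q = 0 := hB p q (fun hc => hp (Fin.ext hc))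
      rw [h0]
      simp only [Complex.ofReal_zero]
      rw [Finset.sum_eq_zero]
      intro j _
      rw [if_neg, zero_mul]
      intro hcon
      exact hp (by rw [hcon])
  have hVU : (newbornSub hm B).map Complex.ofReal = V * U := by
    ext i j
    simp only [Matrix.map_apply, Matrix.mul_apply, hU, hV, Matrix.of_apply, newbornSub]
    rw [Finset.sum_eq_single ((⟨0, hm⟩, j) : Fin m × Fin n)]
    · rw [if_pos rfl, mul_one]
    · intro q _ hq
      rw [if_neg hq, mul_zero]
    · intro hmem; exact absurd (Finset.mem_univ _) hmem
  rw [hUV, hVU]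
  exact ⟨fun h => spec_mul_comm U V hμ h, fun h => spec_mul_comm V U hμ h⟩

lemma specRad_newborn_eq {m n : ℕ} (hm : 2 ≤ m) (hn : 1 ≤ n)
    (B : Matrix (Fin m × Fin n) (Fin m × Fin n) ℝ)
    (hB : ∀ p q, (p.1 : ℕ) ≠ 0 → B p q = 0) :
    specRad (newbornSub (Nat.zero_lt_of_lt hm) B) = specRad B := by
  have hm0 : 0 < m := by omega
  have hn0 : 0 < n := hn
  haveI : Nonempty (Fin n) := ⟨⟨0, hn0⟩⟩
  haveI : Nonempty (Fin m × Fin n) := ⟨(⟨0, hm0⟩, ⟨0, hn0⟩)⟩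
  set Bc := B.map Complex.ofReal with hBc
  set Cc := (newbornSub hm0 B).map Complex.ofReal with hCc
  -- the sets of moduli
  have hset : ∀ {ι : Type} [Fintype ι] [DecidableEq ι] (M : Matrix ι ι ℂ),
      {r : ℝ | ∃ μ : ℂ, μ ∈ spectrum ℂ M ∧ r = ‖μ‖}
        = (norm : ℂ → ℝ) '' spectrum ℂ M := by
    intro ι _ _ M
    ext r
    simp only [Set.mem_setOf_eq, Set.mem_image]
    exact ⟨fun ⟨μ, h1, h2⟩ => ⟨μ, h1, h2.symm⟩, fun ⟨μ, h1, h2⟩ => ⟨μ, h1, h2.symm⟩⟩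
  have h0spec : (0 : ℂ) ∈ spectrum ℂ Bc := by
    rw [spectrum.zero_mem_iff, Matrix.isUnit_iff_isUnit_det, isUnit_iff_ne_zero, not_not]
    apply Matrix.det_eq_zero_of_row_eq_zero ((⟨1, by omega⟩ : Fin m), (⟨0, hn0⟩ : Fin n))
    intro q
    simp only [hBc, Matrix.map_apply]
    rw [hB _ q (by simp), Complex.ofReal_zero]
  -- spectra nonempty and finite
  have hCne : (spectrum ℂ Cc).Nonempty :=
    spectrum.nonempty_of_isAlgClosed_of_finiteDimensional ℂ Cc
  have hBfin : (spectrum ℂ Bc).Finite := Matrix.finite_spectrum Bc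
  have hCfin : (spectrum ℂ Cc).Finite := Matrix.finite_spectrum Cc
  -- set equality
  have hsets : (norm : ℂ → ℝ) '' spectrum ℂ Bc = ((norm : ℂ → ℝ) '' spectrum ℂ Cc) ∪ {0} := by
    ext r
    simp only [Set.mem_union, Set.mem_image, Set.mem_singleton_iff]
    constructor
    · rintro ⟨μ, hμ, rfl⟩
      by_cases h : μ = 0
      · right; rw [h]; simp
      · left; exact ⟨μ, (spec_newborn hm0 B hB h).mp hμ, rfl⟩
    · rintro (⟨μ, hμ, rfl⟩ | rfl)
      · by_cases h : μ = 0
        · exact ⟨0, h ▸ h0spec, by rw [h]⟩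
        · exact ⟨μ, (spec_newborn hm0 B hB h).mpr hμ, rfl⟩
      · exact ⟨0, h0spec, by simp⟩
  -- conclude
  have hCbdd : BddAbove ((norm : ℂ → ℝ) '' spectrum ℂ Cc) := (hCfin.image _).bddAbove
  have hCimne : ((norm : ℂ → ℝ) '' spectrum ℂ Cc).Nonempty := hCne.image _
  have hnonneg : 0 ≤ sSup ((norm : ℂ → ℝ) '' spectrum ℂ Cc) := by
    obtain ⟨r, hr⟩ := hCimne
    obtain ⟨μ, _, rfl⟩ := hr
    exact le_trans (norm_nonneg μ) (le_csSup hCbdd ⟨μ, ‹μ ∈ spectrum ℂ Cc›, rfl⟩)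
  rw [specRad, specRad, hset, hset, ← hBc, ← hCc, hsets,
    csSup_union hCbdd hCimne (by simp [bddAbove_singleton]) (by simp),
    csSup_singleton, sup_eq_left.mpr hnonneg]

lemma partGen_row_zero (m n : ℕ) (f : Fin m → Fin n → ℝ)
    (sd ss : Fin m → Fin n → ℝ) (d : Fin m → Fin n → Fin n → ℝ) :
    ∀ p q, (p.1 : ℕ) ≠ 0 → partGen m n f sd ss d p q = 0 := by
  intro p q hp
  rw [partGen, Matrix.mul_apply]
  apply Finset.sum_eq_zero
  intro r _
  have : fecMat m n f p r = 0 := by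
    simp only [fecMat, localF, Matrix.of_apply]
    rw [if_neg hp]
    simp
  rw [this, zero_mul]

lemma nextGen_row_zero (m n : ℕ) (f : Fin m → Fin n → ℝ)
    (sd ss : Fin m → Fin n → ℝ) (d : Fin m → Fin n → Fin n → ℝ) :
    ∀ p q, (p.1 : ℕ) ≠ 0 → nextGen m n f sd ss d p q = 0 := by
  intro p q hp
  have hfact : nextGen m n f sd ss d = dispMat m n d * partGen m n f sd ss d := by
    rw [nextGen, partGen, Matrix.mul_assoc]
  rw [hfact, Matrix.mul_apply]
  apply Finset.sum_eq_zero
  intro r _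
  by_cases hr : p.1 = r.1
  · rw [partGen_row_zero m n f sd ss d r q (hr ▸ hp), mul_zero]
  · have : dispMat m n d p r = 0 := by
      simp only [dispMat, Matrix.of_apply]
      rw [if_neg hr]
    rw [this, zero_mul]

theorem stmt3
    (m n : ℕ) (hm : 2 ≤ m) (hn : 1 ≤ n)
    (f : Fin m → Fin n → ℝ) (hf : ∀ k i, 0 ≤ f k i)
    (sd ss : Fin m → Fin n → ℝ)
    (hsd : ∀ k i, 0 ≤ sd k i) (hss : ∀ k i, 0 ≤ ss k i)
    (hs1 : ∀ (k : Fin m) (i : Fin n),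
      sd k i + (if (k : ℕ) + 1 < m then ss k i else 0) < 1)
    (d : Fin m → Fin n → Fin n → ℝ)
    (hd0 : ∀ k i j, 0 ≤ d k i j) (hd1 : ∀ k i j, d k i j ≤ 1)
    (hdsum : ∀ k j, ∑ i, d k i j = 1) :
    specRad (newbornSub (show 0 < m by omega) (nextGen m n f sd ss d)) =
        specRad (nextGen m n f sd ss d) ∧
      specRad (newbornSub (show 0 < m by omega) (partGen m n f sd ss d)) =
        specRad (partGen m n f sd ss d) := by
  exact ⟨specRad_newborn_eq hm hn _ (nextGen_row_zero m n f sd ss d),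
    specRad_newborn_eq hm hn _ (partGen_row_zero m n f sd ss d)⟩
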